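/- If a convex set X carries a coalgebra b : X → D(X) for the induced comonad on convex sets, then the restricted map b' : X → D(∂X) is an isomorphism of convex sets; that is, every convex set with a basis is free on its set of extreme points. -/

import Mathlib

open scoped NNReal

/-- The finite (discrete probability) distribution monad on `Sets`:
finitely supported functions to `ℝ≥0` summing to `1`. -/
def FinDist (X : Type u) : Type u :=
  {φ : X →₀ ℝ≥0 // φ.sum (fun _ r => r) = 1}

/-- Unit of the distribution monad: the Dirac distribution `1·x`. -/
noncomputable def FinDist.pure {X : Type u} (x : X) : FinDist X :=
  ⟨Finsupp.single x 1, by simp⟩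

/-- Functorial action of the distribution monad. -/
noncomputable def FinDist.map {X Y : Type u} (f : X → Y) (φ : FinDist X) : FinDist Y :=
  ⟨Finsupp.mapDomain f φ.1, by
    rw [Finsupp.sum_mapDomain_index (fun _ => rfl) (fun _ _ _ => rfl)]
    exact φ.2⟩

/-- Multiplication of the distribution monad: flattening of a distribution of
distributions. -/
noncomputable def FinDist.join {X : Type u} (Φ : FinDist (FinDist X)) : FinDist X :=
  ⟨Φ.1.sum (fun φ r => r • φ.1), by
    rw [Finsupp.sum_sum_index (fun _ => rfl) (fun _ _ _ => rfl)]
    have h2 : ∀ (φ : FinDist X) (r : ℝ≥0), (r • φ.1).sum (fun _ s => s) = r := by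
      intro φ r
      rw [Finsupp.sum_smul_index (fun _ => rfl), ← Finsupp.mul_sum, φ.2, mul_one]
    simp only [h2]
    exact Φ.2⟩

namespace FinDist

variable {X Y Z : Type u}

theorem map_map (g : Y → Z) (f : X → Y) (φ : FinDist X) :
    map g (map f φ) = map (g ∘ f) φ :=
  Subtype.ext Finsupp.mapDomain_comp.symm

theorem map_injective {f : X → Y} (hf : Function.Injective f) :
    Function.Injective (map (X := X) f) := fun φ ψ h =>
  Subtype.ext (Finsupp.mapDomain_injective hf (congrArg Subtype.val h))

theorem eq_pure_of_support_subset {φ : FinDist X} {y : X}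
    (h : φ.1.support ⊆ {y}) : φ = pure y := by
  have h1 : φ.1 = Finsupp.single y (φ.1 y) := Finsupp.support_subset_singleton.mp h
  have h2 : φ.1 y = 1 := by
    have := φ.2
    rw [h1, Finsupp.sum_single_index rfl] at this
    simpa using this
  exact Subtype.ext (by rw [h1, h2]; rfl)

theorem join_map_pure (φ : FinDist X) : join (map pure φ) = φ := by
  apply Subtype.ext
  show (Finsupp.mapDomain pure φ.1).sum (fun ψ r => r • ψ.1) = φ.1
  rw [Finsupp.sum_mapDomain_index (h := fun (ψ : FinDist X) (r : ℝ≥0) => r • ψ.1)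
    (fun ψ => zero_smul _ _) (fun ψ r s => add_smul r s ψ.1)]
  have : ∀ (x : X) (r : ℝ≥0), r • (pure x).1 = Finsupp.single x r := by
    intro x r
    show r • Finsupp.single x 1 = _
    rw [Finsupp.smul_single, smul_eq_mul, mul_one]
  simp only [this]
  exact Finsupp.sum_single φ.1

theorem map_join (f : X → Y) (Φ : FinDist (FinDist X)) :
    map f (join Φ) = join (map (map f) Φ) := by
  apply Subtype.ext
  show Finsupp.mapDomain f (Φ.1.sum fun ψ r => r • ψ.1)
      = (Finsupp.mapDomain (map f) Φ.1).sum (fun ψ r => r • ψ.1)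
  rw [Finsupp.sum_mapDomain_index (h := fun (ψ : FinDist Y) (r : ℝ≥0) => r • ψ.1)
    (fun ψ => zero_smul _ _) (fun ψ r s => add_smul r s ψ.1)]
  have h := map_finsuppSum (Finsupp.mapDomain.addMonoidHom f) Φ.1 (fun ψ r => r • ψ.1)
  simp only [Finsupp.mapDomain.addMonoidHom_apply] at h
  rw [h]
  exact Finsupp.sum_congr fun ψ _ => Finsupp.mapDomain_smul _ _

theorem apply_le_map (f : X → Y) (φ : FinDist X) (x : X) :
    φ.1 x ≤ (map f φ).1 (f x) := by
  classical
  by_cases h : x ∈ φ.1.support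
  · show φ.1 x ≤ Finsupp.mapDomain f φ.1 (f x)
    rw [Finsupp.mapDomain, Finsupp.sum_apply, Finsupp.sum]
    calc φ.1 x = Finsupp.single (f x) (φ.1 x) (f x) := by simp
      _ ≤ _ := Finset.single_le_sum
        (f := fun a => (Finsupp.single (f a) (φ.1 a) : Y →₀ ℝ≥0) (f x))
        (fun i _ => zero_le) h
  · rw [Finsupp.notMem_support_iff.mp h]
    exact zero_le

theorem le_join (Φ : FinDist (FinDist X)) {ψ : FinDist X} (z : X)
    (hψ : ψ ∈ Φ.1.support) : Φ.1 ψ * ψ.1 z ≤ (join Φ).1 z := by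
  show _ ≤ (Φ.1.sum fun φ r => r • φ.1) z
  rw [Finsupp.sum_apply, Finsupp.sum]
  calc Φ.1 ψ * ψ.1 z = (Φ.1 ψ • ψ.1) z := by rw [Finsupp.smul_apply, smul_eq_mul]
    _ ≤ _ := Finset.single_le_sum
      (f := fun φ' : FinDist X => (Φ.1 φ' • φ'.1) z) (fun i _ => zero_le) hψ

end FinDist

/-- If a convex set `X` (an algebra `a : D(X) → X` of the distribution monad) carries a
coalgebra `b : X → D(X)` for the induced comonad on convex sets, then the corestriction
`b' : X → D(∂X)` of `b` to the extreme points of `X` is an isomorphism of convex sets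
(a bijective affine map); every convex set with a basis is free on its extreme points. -/
theorem bases_as_coalgebras_stmt9 {X : Type u}
    (a : FinDist X → X)
    (ha_unit : ∀ x : X, a (FinDist.pure x) = x)
    (ha_assoc : ∀ Φ : FinDist (FinDist X), a (FinDist.join Φ) = a (FinDist.map a Φ))
    (b : X → FinDist X)
    (hb_affine : ∀ φ : FinDist X, b (a φ) = FinDist.join (FinDist.map b φ))
    (hb_counit : ∀ x : X, a (b x) = x)
    (hb_coassoc : ∀ x : X,
      FinDist.map FinDist.pure (b x) = FinDist.map b (b x)) :
    ∃ b' : X → FinDist {x : X // ∀ φ : FinDist X, a φ = x → φ = FinDist.pure x},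
      -- `b'` is the corestriction of `b` to the extreme points
      (∀ x : X, FinDist.map Subtype.val (b' x) = b x) ∧
      -- `b'` is an isomorphism of convex sets: a bijective affine map
      Function.Bijective b' ∧
      (∀ φ : FinDist X, b' (a φ) = FinDist.join (FinDist.map b' φ)) := by
  classical
  let p : X → Prop := fun x => ∀ φ : FinDist X, a φ = x → φ = FinDist.pure x
  -- Step 1: if `b y` is Dirac at `y`, then `y` is extreme.
  have key1 : ∀ y : X, b y = FinDist.pure y → p y := by
    intro y hy φ hφ
    have hjoin : FinDist.join (FinDist.map b φ) = FinDist.pure y := by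
      rw [← hb_affine, hφ, hy]
    have hsupp : ∀ ψ ∈ (FinDist.map b φ).1.support, ψ = FinDist.pure y := by
      intro ψ hψ
      refine FinDist.eq_pure_of_support_subset ?_
      intro z hz
      rw [Finset.mem_singleton]
      by_contra hzy
      have h1 : (0:ℝ≥0) < (FinDist.map b φ).1 ψ * ψ.1 z :=
        lt_of_le_of_ne (zero_le) (Ne.symm (mul_ne_zero
          (Finsupp.mem_support_iff.mp hψ) (Finsupp.mem_support_iff.mp hz)))
      have h2 := FinDist.le_join (FinDist.map b φ) z hψ
      rw [hjoin] at h2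
      have h3 : (FinDist.pure y).1 z = 0 := Finsupp.single_eq_of_ne' (Ne.symm hzy)
      rw [h3] at h2
      exact absurd h2 (not_le.mpr h1)
    refine FinDist.eq_pure_of_support_subset ?_
    intro w hw
    rw [Finset.mem_singleton]
    have hbw : (FinDist.map b φ).1 (b w) ≠ 0 := by
      intro h0
      have hle := FinDist.apply_le_map b φ w
      rw [h0] at hle
      exact Finsupp.mem_support_iff.mp hw (le_antisymm hle (zero_le))
    have hbwy : b w = FinDist.pure y := hsupp _ (Finsupp.mem_support_iff.mpr hbw)
    rw [← hb_counit w, hbwy, ha_unit]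
  -- Step 2: every point in the support of `b x` has Dirac `b`-value.
  have key2 : ∀ x : X, ∀ y ∈ (b x).1.support, b y = FinDist.pure y := by
    intro x y hy
    have hle := FinDist.apply_le_map b (b x) y
    rw [← hb_coassoc x] at hle
    have hne : (FinDist.map FinDist.pure (b x)).1 (b y) ≠ 0 := by
      intro h0
      rw [h0] at hle
      exact Finsupp.mem_support_iff.mp hy (le_antisymm hle (zero_le))
    have hmem := Finsupp.mapDomain_support (Finsupp.mem_support_iff.mpr hne)
    obtain ⟨w, hw, hwy⟩ := Finset.mem_image.mp hmem
    have hwyy : w = y := by rw [← ha_unit w, hwy, hb_counit]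
    rw [← hwy, hwyy]
  have key3 : ∀ x : X, ∀ z ∈ (b x).1.support, p z := fun x z hz => key1 z (key2 x z hz)
  have keyp : ∀ x : X, p x → b x = FinDist.pure x := fun x hx => hx (b x) (hb_counit x)
  -- the corestriction
  let b' : X → FinDist {x : X // p x} := fun x =>
    ⟨(b x).1.subtypeDomain p, by
      rw [Finsupp.sum_subtypeDomain_index (h := fun _ r => r) (key3 x)]
      exact (b x).2⟩
  have hval : ∀ x : X, FinDist.map Subtype.val (b' x) = b x := by
    intro x
    apply Subtype.ext
    apply Finsupp.ext
    intro z
    show Finsupp.mapDomain Subtype.val ((b x).1.subtypeDomain p) z = (b x).1 z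
    by_cases hz : p z
    · have hz' : z = Subtype.val (⟨z, hz⟩ : {x : X // p x}) := rfl
      rw [hz', Finsupp.mapDomain_apply Subtype.val_injective]
      rfl
    · rw [Finsupp.mapDomain_notin_range _ _ (by rintro ⟨⟨w, hw⟩, rfl⟩; exact hz hw)]
      by_contra h0
      exact hz (key3 x z (Finsupp.mem_support_iff.mpr fun h => h0 h.symm))
  have hvalcomp : (FinDist.map Subtype.val ∘ b') = b := funext hval
  refine ⟨b', hval, ⟨?_, ?_⟩, ?_⟩
  · -- injective
    intro x y h
    rw [← hb_counit x, ← hb_counit y, ← hval x, ← hval y, h]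
  · -- surjective
    intro Φ
    refine ⟨a (FinDist.map Subtype.val Φ), ?_⟩
    apply FinDist.map_injective Subtype.val_injective
    rw [hval, hb_affine, FinDist.map_map]
    have hc : (b ∘ Subtype.val : {x : X // p x} → FinDist X)
        = FinDist.pure ∘ Subtype.val := funext fun e => keyp e.1 e.2
    rw [hc, ← FinDist.map_map, FinDist.join_map_pure]
  · -- affine
    intro φ
    apply FinDist.map_injective Subtype.val_injective
    rw [hval, hb_affine, FinDist.map_join, FinDist.map_map, hvalcomp]
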